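/- Let G be a finitely generated free group acting continuously on a compact metric space X. For every x ∈ X and every infinite reduced word w, the limit set ω_w(x) is consistently internally chain transitive. -/

import Mathlib

/-- Reduced words over the alphabet `S` of generators and inverses (`ι` = formal inverse). -/
def Reduced {S : Type*} (ι : S → S) (l : List S) : Prop :=
  l.Chain' (fun a b => b ≠ ι a)

/-- The action of a word `l` on `x`: `f_{uv} = f_v ∘ f_u`. -/
def act {S X : Type*} (f : S → X → X) (l : List S) (x : X) : X :=
  l.foldl (fun y s => f s y) x

/-- The prefix `w_0 w_1 ⋯ w_k` of an infinite word `w`. -/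
def prefixWord {S : Type*} (w : ℕ → S) (k : ℕ) : List S :=
  (List.range (k + 1)).map w

/-- `ω_w(x) = ⋂ₙ cl { f_{w_0⋯w_k}(x) : k > n }`. -/
def omegaW {S X : Type*} [MetricSpace X] (f : S → X → X) (w : ℕ → S) (x : X) : Set X :=
  ⋂ n : ℕ, closure {y | ∃ k : ℕ, n < k ∧ y = act f (prefixWord w k) x}

/-- An `ε`-chain in `Y` indexed by the word `u`. -/
def ChainIn {S X : Type*} [MetricSpace X] (f : S → X → X) (Y : Set X) (ε : ℝ)
    (u : List S) (c : ℕ → X) : Prop :=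
  (∀ i ≤ u.length, c i ∈ Y) ∧
  ∀ i, ∀ h : i < u.length, dist (f (u.get ⟨i, h⟩) (c i)) (c (i + 1)) < ε

/-- Consistent internal chain transitivity. -/
def CICT {S X : Type*} [MetricSpace X] (ι : S → S) (f : S → X → X) (Y : Set X) : Prop :=
  ∃ iFun tFun : X → S, (∀ x ∈ Y, iFun x ≠ ι (tFun x)) ∧
    ∀ x ∈ Y, ∀ y ∈ Y, ∀ ε > (0 : ℝ), ∃ u : List S, Reduced ι u ∧
      u.head? = some (iFun x) ∧ u.getLast? = some (tFun y) ∧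
      ∃ c : ℕ → X, ChainIn f Y ε u c ∧ c 0 = x ∧ c u.length = y

/-- for a free group action, every `ω_w`-limit set is consistently
internally chain transitive. -/
theorem omegaW_CICT {S X : Type*} [Fintype S]
    [MetricSpace X] [CompactSpace X]
    (ι : S → S) (hι : ∀ s, ι (ι s) = s) (hιne : ∀ s, ι s ≠ s)
    (f : S → X → X) (hcont : ∀ s, Continuous (f s))
    (hinv : ∀ s y, f (ι s) (f s y) = y)
    (w : ℕ → S) (hw : ∀ n, w (n + 1) ≠ ι (w n)) (x : X) :
    CICT ι f (omegaW f w x) := by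
  classical
  have hS : Nonempty S := ⟨w 0⟩
  set Y := omegaW f w x with hY
  set orb : ℕ → X := fun j => act f (prefixWord w j) x with horb
  have horbsucc : ∀ j, orb (j + 1) = f (w (j + 1)) (orb j) := by
    intro j
    show act f (prefixWord w (j + 1)) x = f (w (j + 1)) (act f (prefixWord w j) x)
    unfold prefixWord act
    rw [List.range_succ, List.map_append, List.foldl_append]
    rfl
  -- Lemma A: every point of Y is approached by arbitrarily late orbit points
  have hA : ∀ y ∈ Y, ∀ n : ℕ, ∀ δ > (0:ℝ), ∃ k, n < k ∧ dist (orb k) y < δ := by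
    intro y hy n δ hδ
    have h1 := Set.mem_iInter.mp hy n
    rw [Metric.mem_closure_iff] at h1
    obtain ⟨z, hz, hdz⟩ := h1 δ hδ
    obtain ⟨k, hk, rfl⟩ := hz
    exact ⟨k, hk, by rwa [dist_comm]⟩
  -- Lemma B: a fixed pair of letters can be chosen witnessing the approach
  have hB : ∀ y ∈ Y, ∃ p : S × S, ∀ n : ℕ, ∀ δ > (0:ℝ),
      ∃ k, n < k ∧ w (k + 1) = p.1 ∧ w k = p.2 ∧ dist (orb k) y < δ := by
    intro y hy
    choose K hK1 hK2 using fun m : ℕ => hA y hy m (1 / (m + 1)) (by positivity)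
    obtain ⟨p, hp⟩ := Finite.exists_infinite_fiber (fun m => (w (K m + 1), w (K m)))
    rw [Set.infinite_coe_iff] at hp
    refine ⟨p, fun n δ hδ => ?_⟩
    obtain ⟨m0, hm0⟩ := exists_nat_gt (1 / δ)
    obtain ⟨b, hb, hbgt⟩ := hp.exists_gt (max n m0)
    have hbpair : w (K b + 1) = p.1 ∧ w (K b) = p.2 := by
      have := Set.mem_preimage.mp hb
      simp only [Set.mem_singleton_iff, Prod.ext_iff] at this
      exact this
    refine ⟨K b, lt_of_le_of_lt (le_trans (le_max_left n m0) hbgt.le) (hK1 b),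
      hbpair.1, hbpair.2, lt_of_lt_of_le (hK2 b) ?_⟩
    rw [div_le_iff₀ (by positivity)]
    rw [div_lt_iff₀ hδ] at hm0
    have hbm : (m0 : ℝ) ≤ b := by
      exact_mod_cast le_trans (le_max_right n m0) hbgt.le
    nlinarith [hδ.le]
  -- Lemma C: the orbit is attracted to Y
  have hC : ∀ δ > (0:ℝ), ∃ N : ℕ, ∀ j ≥ N, ∃ y ∈ Y, dist (orb j) y < δ := by
    intro δ hδ
    by_contra hcon
    push_neg at hcon
    choose J hJ1 hJ2 using hcon
    obtain ⟨p, -, φ, hφ, hlim⟩ :=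
      IsCompact.tendsto_subseq (x := fun N => orb (J N)) isCompact_univ
        (fun n => Set.mem_univ _)
    have hpY : p ∈ Y := by
      rw [hY, omegaW, Set.mem_iInter]
      intro n
      refine mem_closure_of_tendsto hlim ?_
      filter_upwards [Filter.eventually_ge_atTop (n + 1)] with m hm
      refine ⟨J (φ m), ?_, rfl⟩
      have h1 : m ≤ φ m := hφ.le_apply
      have h2 : φ m ≤ J (φ m) := hJ1 (φ m)
      omega
    have := hlim.eventually (Metric.ball_mem_nhds p hδ)
    obtain ⟨m, hm⟩ := this.exists
    exact absurd (Metric.mem_ball.mp hm) (not_lt.mpr (hJ2 (φ m) p hpY))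
  -- uniform continuity, uniform over the finite alphabet
  have hUC : ∀ ε > (0:ℝ), ∃ δ > (0:ℝ),
      ∀ s : S, ∀ a b : X, dist a b < δ → dist (f s a) (f s b) < ε := by
    intro ε hε
    have h : ∀ s : S, ∃ δ > (0:ℝ), ∀ a b : X, dist a b < δ → dist (f s a) (f s b) < ε := by
      intro s
      have h2 := (Metric.uniformContinuous_iff.mp
        (CompactSpace.uniformContinuous_of_continuous (hcont s))) ε hε
      obtain ⟨δ, hδ, h3⟩ := h2
      exact ⟨δ, hδ, fun a b hab => h3 hab⟩
    choose δf hδf hδf' using h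
    have hne : (Finset.univ : Finset S).Nonempty := Finset.univ_nonempty
    refine ⟨Finset.univ.inf' hne δf, (Finset.lt_inf'_iff hne).mpr fun s _ => hδf s,
      fun s a b hab => hδf' s a b (lt_of_lt_of_le hab (Finset.inf'_le δf (Finset.mem_univ s)))⟩
  -- the pair function
  have hP : ∀ y : X, ∃ p : S × S, y ∈ Y → ∀ n : ℕ, ∀ δ > (0:ℝ),
      ∃ k, n < k ∧ w (k + 1) = p.1 ∧ w k = p.2 ∧ dist (orb k) y < δ := by
    intro y
    by_cases hy : y ∈ Y
    · obtain ⟨p, hp⟩ := hB y hy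
      exact ⟨p, fun _ => hp⟩
    · exact ⟨(Classical.arbitrary S, Classical.arbitrary S), fun h => absurd h hy⟩
  choose P hPspec using hP
  refine ⟨fun y => (P y).1, fun y => (P y).2, ?_, ?_⟩
  · intro y hy
    obtain ⟨k, -, h1, h2, -⟩ := hPspec y hy 0 1 one_pos
    show (P y).1 ≠ ι ((P y).2)
    rw [← h1, ← h2]
    exact hw k
  · intro y hy z hz ε hε
    obtain ⟨δ0, hδ0, hδ0'⟩ := hUC (ε / 2) (by linarith)
    set δ' : ℝ := min δ0 (ε / 2) with hδ'def
    have hδ' : 0 < δ' := lt_min hδ0 (by linarith)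
    obtain ⟨N, hN⟩ := hC δ' hδ'
    choose q hqY hqd using hN
    obtain ⟨k, hNk, hky1, -, hky2⟩ := hPspec y hy N δ' hδ'
    obtain ⟨m, hkm, -, hkz1, hkz2⟩ := hPspec z hz k δ' hδ'
    obtain ⟨L, hmeq⟩ : ∃ L, m = k + L + 1 := ⟨m - k - 1, by omega⟩
    set u : List S := (List.range (L + 1)).map (fun j => w (k + 1 + j)) with hu
    have hulen : u.length = L + 1 := by simp [hu]
    have huget : ∀ i (h : i < u.length), u.get ⟨i, h⟩ = w (k + 1 + i) := by
      intro i h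
      simp [hu]
    -- the chain
    set c : ℕ → X := fun i => if i = 0 then y else
      if h : i < L + 1 then q (k + i) (le_trans hNk.le (Nat.le_add_right k i)) else z with hc
    have hc0 : c 0 = y := by simp [hc]
    have hcL : c (L + 1) = z := by
      simp only [hc]
      rw [if_neg (by omega), dif_neg (by omega)]
    have hcY : ∀ i, c i ∈ Y := by
      intro i
      simp only [hc]
      split
      · exact hy
      · split
        · exact hqY _ _
        · exact hz
    have hclose : ∀ i ≤ L + 1, dist (c i) (orb (k + i)) < δ' := by
      intro i hi
      rcases Nat.eq_zero_or_pos i with rfl | hipos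
      · rw [hc0, dist_comm]; simpa using hky2
      rcases eq_or_lt_of_le hi with rfl | hilt
      · rw [hcL, dist_comm]
        have : k + (L + 1) = m := by omega
        rw [this]; exact hkz2
      · simp only [hc]
        rw [if_neg (by omega), dif_pos hilt, dist_comm]
        exact hqd _ _
    refine ⟨u, ?_, ?_, ?_, c, ⟨fun i _ => hcY i, ?_⟩, hc0, by rw [hulen]; exact hcL⟩
    · -- reduced
      rw [Reduced, List.Chain', List.isChain_iff_getElem]
      intro i h
      have hg1 := huget i (by omega)
      have hg2 := huget (i + 1) (by omega)
      simp only [List.get_eq_getElem] at hg1 hg2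
      rw [hg1, hg2]
      have : k + 1 + (i + 1) = (k + 1 + i) + 1 := by omega
      rw [this]
      exact hw (k + 1 + i)
    · -- head
      rw [hu, List.range_succ_eq_map]
      simp [hky1]
    · -- last
      rw [hu, List.range_succ, List.map_append]
      simp only [List.map_cons, List.map_nil]
      rw [List.getLast?_concat]
      have : k + 1 + L = m := by omega
      rw [this, hkz1]
    · -- chain estimate
      intro i h
      rw [huget]
      have hiL : i < L + 1 := by rwa [hulen] at h
      have h1 : dist (f (w (k + 1 + i)) (c i)) (orb (k + i + 1)) < ε / 2 := by
        have hrec := horbsucc (k + i)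
        have he : k + 1 + i = k + i + 1 := by omega
        rw [he, hrec]
        exact hδ0' _ _ _ (lt_of_lt_of_le (hclose i hiL.le) (min_le_left _ _))
      have h2 : dist (orb (k + i + 1)) (c (i + 1)) < ε / 2 := by
        rw [dist_comm]
        have hcl := hclose (i + 1) (by omega)
        have he : k + (i + 1) = k + i + 1 := by omega
        rw [he] at hcl
        exact lt_of_lt_of_le hcl (min_le_right _ _)
      calc dist (f (w (k + 1 + i)) (c i)) (c (i + 1))
          ≤ dist (f (w (k + 1 + i)) (c i)) (orb (k + i + 1)) + dist (orb (k + i + 1)) (c (i + 1)) :=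
            dist_triangle _ _ _
        _ < ε / 2 + ε / 2 := add_lt_add h1 h2
        _ = ε := by ring
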